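/- Let ε ∈ (0,1) and n ≥ 6 + 4ε/(1-ε). Define p₀ = n/(n-2) and p_{k+1} = (3-2ε) n p_k / ((2-ε+(1-ε)p_k) n - 2(3-2ε) p_k). Then the sequence (p_k) is increasing and converges to p_∞ = (1-ε)n / ((1-ε)n - 6 + 4ε). -/
import Mathlib


open Set Filter

theorem stmt12 (ε n : ℝ) (hε : ε ∈ Ioo (0:ℝ) 1)
    (hn : n > 6 + 4 * ε / (1 - ε)) (p : ℕ → ℝ)
    (hp0 : p 0 = n / (n - 2))
    (hrec : ∀ k, p (k + 1) =
      (3 - 2 * ε) * n * p k / ((2 - ε + (1 - ε) * p k) * n - 2 * (3 - 2 * ε) * p k)) :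
    Monotone p ∧
      Tendsto p atTop (nhds ((1 - ε) * n / ((1 - ε) * n - 6 + 4 * ε))) := by
  obtain ⟨hε0, hε1⟩ := hε
  have h1e : (0:ℝ) < 1 - ε := by linarith
  have h2e : (0:ℝ) < 2 - ε := by linarith
  have h3e : (0:ℝ) < 3 - 2 * ε := by linarith
  have hd6 : 4 * ε / (1 - ε) < n - 6 := by linarith
  have hd6' : (4 * ε) < (n - 6) * (1 - ε) := by
    have := (div_lt_iff₀ h1e).mp hd6
    linarith
  have hn6 : 6 < n := by
    have : 0 < 4 * ε / (1 - ε) := by positivity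
    linarith
  have hn0 : 0 < n := by linarith
  have hA : 0 < (1 - ε) * n - 6 + 4 * ε := by nlinarith
  set q : ℝ := (1 - ε) * n / ((1 - ε) * n - 6 + 4 * ε) with hq
  have hqA : q * ((1 - ε) * n - 6 + 4 * ε) = (1 - ε) * n :=
    div_mul_cancel₀ _ hA.ne'
  -- invariant : 0 < p k < q
  have key : ∀ k, 0 < p k ∧ p k < q := by
    intro k
    induction k with
    | zero =>
      rw [hp0]
      constructor
      · apply div_pos hn0; linarith
      · rw [hq, div_lt_div_iff₀ (by linarith) hA]
        nlinarith
    | succ k ih =>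
      obtain ⟨hpos, hlt⟩ := ih
      have hd : 0 < (2 - ε + (1 - ε) * p k) * n - 2 * (3 - 2 * ε) * p k := by
        nlinarith [mul_pos hpos hA, mul_pos h2e hn0]
      rw [hrec k]
      constructor
      · exact div_pos (by positivity) hd
      · rw [div_lt_iff₀ hd]
        have h4 : p k * (q * ((1 - ε) * n - 6 + 4 * ε)) = p k * ((1 - ε) * n) := by
          rw [hqA]
        nlinarith [h4, mul_pos (mul_pos h2e hn0) (sub_pos.mpr hlt)]
  -- strict monotonicity
  have hstep : ∀ k, p k < p (k + 1) := by
    intro k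
    obtain ⟨hpos, hlt⟩ := key k
    have hd : 0 < (2 - ε + (1 - ε) * p k) * n - 2 * (3 - 2 * ε) * p k := by
      nlinarith [mul_pos hpos hA, mul_pos h2e hn0]
    rw [hrec k, lt_div_iff₀ hd]
    have h4 : p k * (q * ((1 - ε) * n - 6 + 4 * ε)) = p k * ((1 - ε) * n) := by
      rw [hqA]
    have h5 : 0 < p k * ((1 - ε) * n - 6 + 4 * ε) * (q - p k) :=
      mul_pos (mul_pos hpos hA) (sub_pos.mpr hlt)
    nlinarith [h4, h5]
  have hmono : StrictMono p := strictMono_nat_of_lt_succ hstep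
  have hbdd : BddAbove (Set.range p) := ⟨q, by rintro _ ⟨k, rfl⟩; exact (key k).2.le⟩
  have hT : Tendsto p atTop (nhds (⨆ k, p k)) := tendsto_atTop_ciSup hmono.monotone hbdd
  set L : ℝ := ⨆ k, p k with hLdef
  have hL0 : 0 < L := lt_of_lt_of_le (key 0).1 (le_ciSup hbdd 0)
  have hLq : L ≤ q := ciSup_le fun k => (key k).2.le
  have hdL : 0 < (2 - ε + (1 - ε) * L) * n - 2 * (3 - 2 * ε) * L := by
    nlinarith [mul_pos hL0 hA, mul_pos h2e hn0]
  have hcont : ContinuousAt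
      (fun x : ℝ => (3 - 2 * ε) * n * x / ((2 - ε + (1 - ε) * x) * n - 2 * (3 - 2 * ε) * x)) L :=
    ContinuousAt.div (by fun_prop) (by fun_prop) hdL.ne'
  have hT1 : Tendsto (fun k => p (k + 1)) atTop (nhds L) :=
    hT.comp (tendsto_add_atTop_nat 1)
  have hT1' : Tendsto
      (fun k => (3 - 2 * ε) * n * p k / ((2 - ε + (1 - ε) * p k) * n - 2 * (3 - 2 * ε) * p k))
      atTop (nhds L) := by
    simpa only [← hrec] using hT1
  have hT2 : Tendsto
      (fun k => (3 - 2 * ε) * n * p k / ((2 - ε + (1 - ε) * p k) * n - 2 * (3 - 2 * ε) * p k))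
      atTop (nhds ((3 - 2 * ε) * n * L / ((2 - ε + (1 - ε) * L) * n - 2 * (3 - 2 * ε) * L))) :=
    hcont.tendsto.comp hT
  have hfix : (3 - 2 * ε) * n * L / ((2 - ε + (1 - ε) * L) * n - 2 * (3 - 2 * ε) * L) = L :=
    tendsto_nhds_unique hT2 hT1'
  have h := (div_eq_iff hdL.ne').mp hfix
  have h2 : L * (L * ((1 - ε) * n - 6 + 4 * ε)) = L * ((1 - ε) * n) := by
    linear_combination -h
  have hLA : L * ((1 - ε) * n - 6 + 4 * ε) = (1 - ε) * n :=
    mul_left_cancel₀ hL0.ne' h2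
  have hLeq : L = (1 - ε) * n / ((1 - ε) * n - 6 + 4 * ε) := by
    rw [eq_div_iff hA.ne']; exact hLA
  exact ⟨hmono.monotone, by rw [hq, ← hLeq]; exact hT⟩
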